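/- Let (P, W, c) be a witness Gabriel drawing of a complete k-partite graph with k ≥ 3, with P ∪ W in general position and with every color class of c containing at least two points. Fix a color i₀ ∈ Fin k ('black'). Let m ≥ 3 and let q : Fin m → P be injective with each q(j) lying on the convex hull of P, with q(0), …, q(m−1) in counterclockwise convex position, with at least one q(j) of color i₀, and with no two cyclically consecutive points q(j), q(j+1 mod m) both of color i₀. Then no point p ∈ P with c(p) = i₀ lies in the interior of convexHull{q(0), …, q(m−1)}. -/

import Mathlib

open scoped RealInnerProductSpace

noncomputable section

/-- The Euclidean plane. -/
abbrev Pt := EuclideanSpace ℝ (Fin 2)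

/-- The closed disk with diameter `ab`. -/
def diskD (a b : Pt) : Set Pt := Metric.closedBall (midpoint ℝ a b) (dist a b / 2)

/-- `a` and `b` are adjacent in the witness Gabriel graph with witness set `W`. -/
def gabrielEdge (W : Set Pt) (a b : Pt) : Prop := (diskD a b \ {a, b}) ∩ W = ∅

/-- General position: no three points collinear, no four points concyclic. -/
def GenPos (S : Set Pt) : Prop :=
  (∀ a ∈ S, ∀ b ∈ S, ∀ c ∈ S, a ≠ b → a ≠ c → b ≠ c → ¬ Collinear ℝ ({a, b, c} : Set Pt)) ∧
  (∀ a ∈ S, ∀ b ∈ S, ∀ c ∈ S, ∀ d ∈ S, a ≠ b → a ≠ c → a ≠ d → b ≠ c → b ≠ d → c ≠ d →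
    ¬ EuclideanGeometry.Cospherical ({a, b, c, d} : Set Pt))

/-- Planar determinant `u₁v₂ − u₂v₁`. -/
def det2 (u v : Pt) : ℝ := u 0 * v 1 - u 1 * v 0

/-- Counterclockwise convex position. -/
def CCWConvexPos {m : ℕ} (q : Fin m → Pt) : Prop :=
  ∀ i j k : Fin m, i < j → j < k → 0 < det2 (q j - q i) (q k - q i)

/-- Cyclic successor in `Fin m`. -/
def cyclicSucc {m : ℕ} (hm : 0 < m) (i : Fin m) : Fin m :=
  ⟨((i : ℕ) + 1) % m, Nat.mod_lt _ hm⟩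

lemma det2_swap (u v : Pt) : det2 u v = - det2 v u := by simp [det2]; ring

lemma det2_self (u : Pt) : det2 u u = 0 := by simp [det2]; ring

lemma det2_zero_right (u : Pt) : det2 u 0 = 0 := by simp [det2]

lemma det2_combo (v o x y : Pt) (s t : ℝ) (hst : s + t = 1) :
    det2 v (s • x + t • y - o) = s * det2 v (x - o) + t * det2 v (y - o) := by
  simp only [det2, PiLp.sub_apply, PiLp.add_apply, PiLp.smul_apply, smul_eq_mul]
  linear_combination (v 0 * o 1 - v 1 * o 0) * hst

lemma det2_add_smul (v o x u : Pt) (t : ℝ) :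
    det2 v (x + t • u - o) = det2 v (x - o) + t * det2 v u := by
  simp only [det2, PiLp.sub_apply, PiLp.add_apply, PiLp.smul_apply, smul_eq_mul]
  ring

lemma det2_rot (a b c : Pt) : det2 (b - a) (c - a) = det2 (c - b) (a - b) := by
  simp only [det2, PiLp.sub_apply]; ring

lemma convex_halfplane (v o : Pt) (t : ℝ) : Convex ℝ {x : Pt | t ≤ det2 v (x - o)} := by
  intro x hx y hy s r hs hr hsr
  simp only [Set.mem_setOf_eq] at *
  rw [det2_combo v o x y s r hsr]
  have h1 : s * t + r * t = t := by rw [← add_mul, hsr, one_mul]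
  nlinarith [mul_le_mul_of_nonneg_left hx hs, mul_le_mul_of_nonneg_left hy hr]

lemma cramer_sum (a h b x : Pt) :
    det2 (b - h) (x - h) - det2 (b - a) (x - a) + det2 (h - a) (x - a) = det2 (h - a) (b - a) := by
  simp only [det2, PiLp.sub_apply]; ring

lemma cramer_combo (a h b x : Pt) (hD : det2 (h - a) (b - a) ≠ 0) :
    (det2 (b - h) (x - h) / det2 (h - a) (b - a)) • a
      + (- det2 (b - a) (x - a) / det2 (h - a) (b - a)) • h
      + (det2 (h - a) (x - a) / det2 (h - a) (b - a)) • b = x := by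
  have key : ∀ i : Fin 2,
      ((det2 (b - h) (x - h) / det2 (h - a) (b - a)) • a
      + (- det2 (b - a) (x - a) / det2 (h - a) (b - a)) • h
      + (det2 (h - a) (x - a) / det2 (h - a) (b - a)) • b) i = x i := by
    rw [Fin.forall_fin_two]
    constructor <;>
    · simp only [PiLp.add_apply, PiLp.smul_apply, smul_eq_mul]
      field_simp
      simp only [det2, PiLp.sub_apply]
      ring
  ext i
  exact key i

lemma mem_diskD_iff (a b w : Pt) : w ∈ diskD a b ↔ ⟪a - w, b - w⟫ ≤ 0 := by
  have hid : ⟪a - w, b - w⟫ = ‖w - midpoint ℝ a b‖ ^ 2 - (dist a b / 2) ^ 2 := by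
    rw [dist_eq_norm, midpoint_eq_smul_add, invOf_eq_inv]
    rw [← real_inner_self_eq_norm_sq]
    have h4 : (‖a - b‖ / 2) ^ 2 = ⟪a - b, a - b⟫ / 4 := by
      rw [real_inner_self_eq_norm_sq]; ring
    rw [h4]
    simp only [inner_sub_left, inner_sub_right, inner_add_left, inner_add_right,
      real_inner_smul_left, real_inner_smul_right]
    rw [real_inner_comm b a, real_inner_comm w a, real_inner_comm w b]
    ring
  constructor
  · intro hw
    have h1 : dist w (midpoint ℝ a b) ≤ dist a b / 2 := Metric.mem_closedBall.mp hw
    rw [dist_eq_norm] at h1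
    have h2 : (0:ℝ) ≤ ‖w - midpoint ℝ a b‖ := norm_nonneg _
    rw [hid]; nlinarith
  · intro hin
    rw [hid] at hin
    have h2 : (0:ℝ) ≤ ‖w - midpoint ℝ a b‖ := norm_nonneg _
    have h3 : (0:ℝ) ≤ dist a b / 2 := by positivity
    have : ‖w - midpoint ℝ a b‖ ≤ dist a b / 2 := by nlinarith
    exact Metric.mem_closedBall.mpr (by rw [dist_eq_norm]; exact this)

lemma exists_witness {W : Finset Pt} {a b : Pt} (hne : ¬ gabrielEdge (↑W) a b) :
    ∃ w ∈ W, w ∈ diskD a b ∧ w ≠ a ∧ w ≠ b := by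
  have : ((diskD a b \ {a, b}) ∩ ↑W).Nonempty := Set.nonempty_iff_ne_empty.mpr hne
  obtain ⟨w, ⟨⟨hwD, hwn⟩, hwW⟩⟩ := this
  simp only [Set.mem_insert_iff, Set.mem_singleton_iff, not_or] at hwn
  exact ⟨w, hwW, hwD, hwn.1, hwn.2⟩

lemma edge_inner_pos {W : Finset Pt} {a b w : Pt} (he : gabrielEdge (↑W) a b)
    (hw : w ∈ W) (hwa : w ≠ a) (hwb : w ≠ b) : 0 < ⟪a - w, b - w⟫ := by
  by_contra hle
  push_neg at hle
  have hmem : w ∈ (diskD a b \ {a, b}) ∩ ↑W := by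
    refine ⟨⟨(mem_diskD_iff a b w).mpr hle, ?_⟩, by exact_mod_cast hw⟩
    simp [hwa, hwb]
  rw [gabrielEdge] at he
  rw [he] at hmem
  exact hmem

set_option maxHeartbeats 1600000 in
/-- In a witness Gabriel drawing of a complete `k`-partite graph, the convex
hull of hull vertices with at least one black point and no two cyclically consecutive black
points contains no black point in its interior. -/
theorem no_black_point_inside_subset_hull
    {k : ℕ} (hk : 3 ≤ k) (P W : Finset Pt) (c : Pt → Fin k)
    (hgp : GenPos ((P : Set Pt) ∪ (W : Set Pt)))
    (hsize : ∀ i : Fin k, 2 ≤ (P.filter (fun p => c p = i)).card)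
    (hdraw : ∀ a ∈ P, ∀ b ∈ P, a ≠ b →
      (gabrielEdge (W : Set Pt) a b ↔ c a ≠ c b))
    (i₀ : Fin k) {m : ℕ} (hm : 3 ≤ m) (q : Fin m → Pt)
    (hqP : ∀ j, q j ∈ P) (hqinj : Function.Injective q)
    (hqhull : ∀ j, q j ∉ convexHull ℝ ((P : Set Pt) \ {q j}))
    (hconv : CCWConvexPos q)
    (hblack : ∃ j, c (q j) = i₀)
    (hnoconsec : ∀ j : Fin m, ¬ (c (q j) = i₀ ∧ c (q (cyclicSucc (by omega) j)) = i₀)) :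
    ∀ p ∈ P, c p = i₀ → p ∉ interior (convexHull ℝ (Set.range q)) := by
  classical
  intro p hpP hcp hpint
  have hm0 : 0 < m := by omega
  set succ' : Fin m → Fin m := cyclicSucc hm0 with hsucc'def
  set pred' : Fin m → Fin m := fun j => ⟨((j : ℕ) + (m - 1)) % m, Nat.mod_lt _ hm0⟩
    with hpred'def
  -- val characterizations
  have hsuccval : ∀ j : Fin m, ((succ' j) : ℕ) = (j : ℕ) + 1 ∨
      ((j : ℕ) = m - 1 ∧ ((succ' j) : ℕ) = 0) := by
    intro j
    have hj : (j : ℕ) < m := j.isLt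
    rcases Nat.lt_or_ge ((j : ℕ) + 1) m with h | h
    · left; show ((j : ℕ) + 1) % m = (j : ℕ) + 1; exact Nat.mod_eq_of_lt h
    · right
      have hje : (j : ℕ) + 1 = m := by omega
      constructor
      · omega
      · show ((j : ℕ) + 1) % m = 0
        rw [hje, Nat.mod_self]
  have hpredval : ∀ j : Fin m, ((pred' j) : ℕ) + 1 = (j : ℕ) ∨
      ((j : ℕ) = 0 ∧ ((pred' j) : ℕ) = m - 1) := by
    intro j
    have hj : (j : ℕ) < m := j.isLt
    rcases Nat.eq_zero_or_pos (j : ℕ) with h | h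
    · right
      refine ⟨h, ?_⟩
      show ((j : ℕ) + (m - 1)) % m = m - 1
      rw [h, Nat.zero_add, Nat.mod_eq_of_lt (by omega)]
    · left
      show ((j : ℕ) + (m - 1)) % m + 1 = (j : ℕ)
      have : (j : ℕ) + (m - 1) = m + ((j : ℕ) - 1) := by omega
      rw [this, Nat.add_mod_left, Nat.mod_eq_of_lt (by omega)]
      omega
  clear_value succ' pred'
  have hsucc_pred : ∀ j : Fin m, succ' (pred' j) = j := by
    intro j
    have hj : (j : ℕ) < m := j.isLt
    have hpj : ((pred' j) : ℕ) < m := (pred' j).isLt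
    apply Fin.ext
    rcases hsuccval (pred' j) with h | ⟨h1, h2⟩ <;> rcases hpredval j with h' | ⟨h1', h2'⟩ <;>
      omega
  have hpred_ne : ∀ j : Fin m, pred' j ≠ j := by
    intro j hne
    have := congrArg Fin.val hne
    rcases hpredval j with h | ⟨h1, h2⟩ <;> omega
  have hsucc_ne : ∀ j : Fin m, succ' j ≠ j := by
    intro j hne
    have := congrArg Fin.val hne
    have hj : (j : ℕ) < m := j.isLt
    rcases hsuccval j with h | ⟨h1, h2⟩ <;> omega
  have hpred_ne_succ : ∀ j : Fin m, pred' j ≠ succ' j := by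
    intro j hne
    have := congrArg Fin.val hne
    have hj : (j : ℕ) < m := j.isLt
    rcases hsuccval j with h | ⟨h1, h2⟩ <;> rcases hpredval j with h' | ⟨h1', h2'⟩ <;> omega
  -- no-consecutive-black facts
  have hnb_succ : ∀ j : Fin m, c (q j) = i₀ → c (q (succ' j)) ≠ i₀ := by
    intro j hj hcon
    exact hnoconsec j ⟨hj, hcon⟩
  have hnb_pred : ∀ j : Fin m, c (q j) = i₀ → c (q (pred' j)) ≠ i₀ := by
    intro j hj hcon
    have hthis := hnoconsec (pred' j)
    rw [hsucc_pred j] at hthis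
    exact hthis ⟨hcon, hj⟩
  -- ccw machinery
  have hccw : ∀ i j l : Fin m,
      ((i < j ∧ j < l) ∨ (j < l ∧ l < i) ∨ (l < i ∧ i < j)) →
      0 < det2 (q j - q i) (q l - q i) := by
    intro i j l hl
    rcases hl with ⟨h1, h2⟩ | ⟨h1, h2⟩ | ⟨h1, h2⟩
    · exact hconv i j l h1 h2
    · rw [det2_rot (q i) (q j) (q l)]
      exact hconv j l i h1 h2
    · rw [det2_rot (q i) (q j) (q l), det2_rot (q j) (q l) (q i)]
      exact hconv l i j h1 h2
  have hB2 : ∀ j : Fin m, 0 < det2 (q j - q (pred' j)) (q (succ' j) - q (pred' j)) := by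
    intro j
    apply hccw
    simp only [Fin.lt_def]
    have hj : (j : ℕ) < m := j.isLt
    rcases hsuccval j with h | ⟨h1, h2⟩ <;> rcases hpredval j with h' | ⟨h1', h2'⟩ <;> omega
  have hB3 : ∀ j σ : Fin m, σ ≠ pred' j → σ ≠ j →
      0 < det2 (q j - q (pred' j)) (q σ - q (pred' j)) := by
    intro j σ hs1 hs2
    apply hccw
    simp only [Fin.lt_def]
    have hj : (j : ℕ) < m := j.isLt
    have hσ : (σ : ℕ) < m := σ.isLt
    have hs1' : (σ : ℕ) ≠ ((pred' j) : ℕ) := fun h => hs1 (Fin.ext h)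
    have hs2' : (σ : ℕ) ≠ (j : ℕ) := fun h => hs2 (Fin.ext h)
    rcases hpredval j with h' | ⟨h1', h2'⟩ <;> omega
  have hB4 : ∀ j σ : Fin m, σ ≠ j → σ ≠ succ' j →
      0 < det2 (q (succ' j) - q j) (q σ - q j) := by
    intro j σ hs1 hs2
    apply hccw
    simp only [Fin.lt_def]
    have hj : (j : ℕ) < m := j.isLt
    have hσ : (σ : ℕ) < m := σ.isLt
    have hs1' : (σ : ℕ) ≠ (j : ℕ) := fun h => hs1 (Fin.ext h)
    have hs2' : (σ : ℕ) ≠ ((succ' j) : ℕ) := fun h => hs2 (Fin.ext h)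
    rcases hsuccval j with h | ⟨h1, h2⟩ <;> omega
  -- hull memberships and functional bounds
  have hHull : p ∈ convexHull ℝ (Set.range q) := interior_subset hpint
  have hf2nn : ∀ j : Fin m, ∀ x ∈ convexHull ℝ (Set.range q),
      0 ≤ det2 (q j - q (pred' j)) (x - q (pred' j)) := by
    intro j
    have hsub : Set.range q ⊆ {x : Pt | 0 ≤ det2 (q j - q (pred' j)) (x - q (pred' j))} := by
      rintro x ⟨σ, rfl⟩
      simp only [Set.mem_setOf_eq]
      by_cases h1 : σ = pred' j
      · rw [h1, sub_self, det2_zero_right]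
      · by_cases h2 : σ = j
        · rw [h2, det2_self]
        · exact le_of_lt (hB3 j σ h1 h2)
    intro x hx
    exact convexHull_min hsub (convex_halfplane _ _ 0) hx
  have hf3nn : ∀ j : Fin m, ∀ x ∈ convexHull ℝ (Set.range q),
      0 ≤ det2 (q (succ' j) - q j) (x - q j) := by
    intro j
    have hsub : Set.range q ⊆ {x : Pt | 0 ≤ det2 (q (succ' j) - q j) (x - q j)} := by
      rintro x ⟨σ, rfl⟩
      simp only [Set.mem_setOf_eq]
      by_cases h1 : σ = j
      · rw [h1, sub_self, det2_zero_right]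
      · by_cases h2 : σ = succ' j
        · rw [h2, det2_self]
        · exact le_of_lt (hB4 j σ h1 h2)
    intro x hx
    exact convexHull_min hsub (convex_halfplane _ _ 0) hx
  -- p is not a vertex
  have hpne : ∀ j : Fin m, p ≠ q j := by
    intro j hpq
    -- functional f2 at j has a minimum 0 on the hull, attained at q j = p,
    -- contradicting p being interior.
    set v : Pt := q j - q (pred' j) with hvdef
    set o : Pt := q (pred' j) with hodef
    have hvne : v ≠ 0 := sub_ne_zero_of_ne (hqinj.ne_iff.mpr (Ne.symm (hpred_ne j)))
    have hvsq : 0 < v 0 ^ 2 + v 1 ^ 2 := by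
      rcases lt_or_eq_of_le (by positivity : (0:ℝ) ≤ v 0 ^ 2 + v 1 ^ 2) with h | h
      · exact h
      · exfalso
        apply hvne
        have h0 : v 0 = 0 := by nlinarith [sq_nonneg (v 0), sq_nonneg (v 1)]
        have h1 : v 1 = 0 := by nlinarith [sq_nonneg (v 0), sq_nonneg (v 1)]
        ext i
        fin_cases i
        · exact h0
        · exact h1
    obtain ⟨ε, hε, hball⟩ := Metric.mem_nhds_iff.mp (mem_interior_iff_mem_nhds.mp hpint)
    set u : Pt := (WithLp.equiv 2 (Fin 2 → ℝ)).symm ![v 1, -(v 0)] with hudef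
    have hu0 : u 0 = v 1 := rfl
    have hu1 : u 1 = -(v 0) := rfl
    have hdet2u : det2 v u = -(v 0 ^ 2 + v 1 ^ 2) := by
      simp only [det2, hu0, hu1]; ring
    set δ : ℝ := ε / (‖u‖ + 1) with hδdef
    have hδ : 0 < δ := by
      apply div_pos hε
      have := norm_nonneg u
      linarith
    have hy : p + δ • u ∈ Metric.ball p ε := by
      rw [Metric.mem_ball, dist_eq_norm, add_sub_cancel_left, norm_smul,
        Real.norm_eq_abs, abs_of_pos hδ]
      have hlt : δ * ‖u‖ < δ * (‖u‖ + 1) := by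
        apply mul_lt_mul_of_pos_left _ hδ
        linarith
      have heq : δ * (‖u‖ + 1) = ε := by
        rw [hδdef]
        field_simp
      linarith
    have hyhull : p + δ • u ∈ convexHull ℝ (Set.range q) := hball hy
    have hge : 0 ≤ det2 v ((p + δ • u) - o) := hf2nn j _ hyhull
    rw [det2_add_smul, hdet2u] at hge
    have hfp : det2 v (p - o) = 0 := by
      rw [hpq, hvdef, hodef, det2_self]
    rw [hfp] at hge
    nlinarith
  -- case A
  have caseA : ∀ M : Finset Pt, (∀ x ∈ M, x ∈ P ∧ c x ≠ i₀) → p ∈ convexHull ℝ (↑M) → False := by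
    intro M hM hpM
    obtain ⟨j₀, hj₀⟩ := hblack
    set g : Pt := q j₀ with hgdef
    have hgP : g ∈ P := hqP j₀
    have hpg : p ≠ g := hpne j₀
    have hnedge : ¬ gabrielEdge (↑W) p g := by
      intro he
      exact (hdraw p hpP g hgP hpg).mp he (by rw [hcp, hj₀])
    obtain ⟨w, hwW, hwD, hwp, hwg⟩ := exists_witness hnedge
    have hinner : ⟪p - w, g - w⟫ ≤ 0 := (mem_diskD_iff p g w).mp hwD
    rw [Finset.convexHull_eq] at hpM
    obtain ⟨μ, hμ0, hμ1, hμc⟩ := hpM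
    have hpsum : p = ∑ y ∈ M, μ y • y := by
      rw [← hμc, Finset.centerMass, hμ1, inv_one, one_smul]
      simp
    have hexp : p - w = ∑ y ∈ M, μ y • (y - w) := by
      have : ∑ y ∈ M, μ y • (y - w) = (∑ y ∈ M, μ y • y) - (∑ y ∈ M, μ y) • w := by
        rw [Finset.sum_smul, ← Finset.sum_sub_distrib]
        congr 1
        funext y
        rw [smul_sub]
      rw [this, hμ1, one_smul, ← hpsum]
    have hsum : ∑ y ∈ M, μ y * ⟪y - w, g - w⟫ ≤ 0 := by
      calc ∑ y ∈ M, μ y * ⟪y - w, g - w⟫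
          = ⟪∑ y ∈ M, μ y • (y - w), g - w⟫ := by
            rw [sum_inner]
            congr 1
            funext y
            rw [real_inner_smul_left]
        _ = ⟪p - w, g - w⟫ := by rw [← hexp]
        _ ≤ 0 := hinner
    have hedgey : ∀ y ∈ M, w ≠ y → 0 < ⟪y - w, g - w⟫ := by
      intro y hyM hwy
      obtain ⟨hyP, hyc⟩ := hM y hyM
      have hyg : y ≠ g := fun h => hyc (by rw [h, hj₀])
      have hedge : gabrielEdge (↑W) y g := by
        apply (hdraw y hyP g hgP hyg).mpr
        rw [hj₀]; exact hyc
      exact edge_inner_pos hedge hwW hwy hwg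
    have hterm : ∀ y ∈ M, 0 ≤ μ y * ⟪y - w, g - w⟫ := by
      intro y hyM
      by_cases hwy : w = y
      · rw [← hwy, sub_self, inner_zero_left, mul_zero]
      · exact mul_nonneg (hμ0 y hyM) (le_of_lt (hedgey y hyM hwy))
    have hzero : ∀ y ∈ M, μ y * ⟪y - w, g - w⟫ = 0 := by
      have hs0 : ∑ y ∈ M, μ y * ⟪y - w, g - w⟫ = 0 :=
        le_antisymm hsum (Finset.sum_nonneg hterm)
      intro y hy
      exact (Finset.sum_eq_zero_iff_of_nonneg hterm).mp hs0 y hy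
    have hkey : ∀ y ∈ M, 0 < μ y → w = y := by
      intro y hyM hμy
      by_contra hwy
      have h1 : ⟪y - w, g - w⟫ = 0 := by
        have := hzero y hyM
        rcases mul_eq_zero.mp this with h | h
        · exact absurd h (ne_of_gt hμy)
        · exact h
      exact absurd h1 (ne_of_gt (hedgey y hyM hwy))
    have hy0 : ∃ y ∈ M, 0 < μ y := by
      by_contra hno
      push_neg at hno
      have : ∑ y ∈ M, μ y = 0 :=
        Finset.sum_eq_zero fun y hy => le_antisymm (hno y hy) (hμ0 y hy)
      rw [hμ1] at this
      exact one_ne_zero this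
    obtain ⟨y₀, hy₀M, hy₀pos⟩ := hy0
    have hwy₀ : w = y₀ := hkey y₀ hy₀M hy₀pos
    have hothers : ∀ y ∈ M, y ≠ y₀ → μ y = 0 := by
      intro y hyM hne
      by_contra hne0
      have hpos : 0 < μ y := lt_of_le_of_ne (hμ0 y hyM) (Ne.symm hne0)
      exact hne ((hkey y hyM hpos).symm.trans hwy₀)
    have hμy₀ : μ y₀ = 1 := by
      rw [← hμ1, Finset.sum_eq_single_of_mem y₀ hy₀M]
      intro b hb hne
      exact hothers b hb hne
    have hpy₀ : p = y₀ := by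
      rw [hpsum, Finset.sum_eq_single_of_mem y₀ hy₀M]
      · rw [hμy₀, one_smul]
      · intro b hb hne
        rw [hothers b hb hne, zero_smul]
    exact (hM y₀ hy₀M).2 (by rw [← hpy₀, hcp])
  -- case B
  have caseB : ∀ j : Fin m, c (q j) = i₀ →
      p ∈ convexHull ℝ ({q (pred' j), q j, q (succ' j)} : Set Pt) → False := by
    intro j hjb hpT
    set a : Pt := q (pred' j) with hadef
    set h : Pt := q j with hhdef
    set b : Pt := q (succ' j) with hbdef
    have hab : a ≠ b := hqinj.ne_iff.mpr (hpred_ne_succ j)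
    have hah : a ≠ h := hqinj.ne_iff.mpr (hpred_ne j)
    have hhb : h ≠ b := hqinj.ne_iff.mpr (Ne.symm (hsucc_ne j))
    have hca : c a ≠ i₀ := hnb_pred j hjb
    have hcb : c b ≠ i₀ := hnb_succ j hjb
    have haP : a ∈ P := hqP _
    have hhP : h ∈ P := hqP _
    have hbP : b ∈ P := hqP _
    have hph : p ≠ h := hpne j
    -- witness for the non-edge (p, h)
    have hnedge : ¬ gabrielEdge (↑W) p h := by
      intro he
      exact (hdraw p hpP h hhP hph).mp he (by rw [hcp, hjb])
    obtain ⟨w, hwW, hwD, hwp, hwh⟩ := exists_witness hnedge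
    have hinner : ⟪p - w, h - w⟫ ≤ 0 := (mem_diskD_iff p h w).mp hwD
    -- weights
    have hset : ({a, h, b} : Set Pt) = ↑({a, h, b} : Finset Pt) := by simp
    rw [hset, Finset.convexHull_eq] at hpT
    obtain ⟨μ, hμ0, hμ1, hμc⟩ := hpT
    set M : Finset Pt := {a, h, b} with hMdef
    have haM : a ∈ M := by simp [hMdef]
    have hhM : h ∈ M := by simp [hMdef]
    have hbM : b ∈ M := by simp [hMdef]
    have hpsum : p = ∑ y ∈ M, μ y • y := by
      rw [← hμc, Finset.centerMass, hμ1, inv_one, one_smul]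
      simp
    have hexp : p - w = ∑ y ∈ M, μ y • (y - w) := by
      have : ∑ y ∈ M, μ y • (y - w) = (∑ y ∈ M, μ y • y) - (∑ y ∈ M, μ y) • w := by
        rw [Finset.sum_smul, ← Finset.sum_sub_distrib]
        congr 1
        funext y
        rw [smul_sub]
      rw [this, hμ1, one_smul, ← hpsum]
    have hsum : ∑ y ∈ M, μ y * ⟪y - w, h - w⟫ ≤ 0 := by
      calc ∑ y ∈ M, μ y * ⟪y - w, h - w⟫
          = ⟪∑ y ∈ M, μ y • (y - w), h - w⟫ := by
            rw [sum_inner]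
            congr 1
            funext y
            rw [real_inner_smul_left]
        _ = ⟪p - w, h - w⟫ := by rw [← hexp]
        _ ≤ 0 := hinner
    have hedgey : ∀ y, y ∈ P → c y ≠ i₀ → w ≠ y → 0 < ⟪y - w, h - w⟫ := by
      intro y hyP hyc hwy
      have hyh : y ≠ h := fun he => hyc (by rw [he, hjb])
      have hedge : gabrielEdge (↑W) y h := by
        apply (hdraw y hyP h hhP hyh).mpr
        rw [hjb]; exact hyc
      exact edge_inner_pos hedge hwW hwy hwh
    have hterm : ∀ y ∈ M, 0 ≤ μ y * ⟪y - w, h - w⟫ := by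
      intro y hyM
      have hyM' : y = a ∨ y = h ∨ y = b := by
        simpa [hMdef] using hyM
      by_cases hwy : w = y
      · rw [← hwy, sub_self, inner_zero_left, mul_zero]
      · rcases hyM' with rfl | rfl | rfl
        · exact mul_nonneg (hμ0 _ hyM) (le_of_lt (hedgey _ haP hca hwy))
        · have hpos : 0 < ⟪h - w, h - w⟫ := by
            rw [real_inner_self_eq_norm_sq]
            exact pow_pos (norm_pos_iff.mpr (sub_ne_zero_of_ne (Ne.symm hwy))) 2
          exact mul_nonneg (hμ0 _ hyM) (le_of_lt hpos)
        · exact mul_nonneg (hμ0 _ hyM) (le_of_lt (hedgey _ hbP hcb hwy))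
    have hzero : ∀ y ∈ M, μ y * ⟪y - w, h - w⟫ = 0 := by
      have hs0 : ∑ y ∈ M, μ y * ⟪y - w, h - w⟫ = 0 :=
        le_antisymm hsum (Finset.sum_nonneg hterm)
      intro y hy
      exact (Finset.sum_eq_zero_iff_of_nonneg hterm).mp hs0 y hy
    -- the weight of h must vanish
    have hμh : μ h = 0 := by
      have h1 := hzero h hhM
      have h2 : 0 < ⟪h - w, h - w⟫ := by
        rw [real_inner_self_eq_norm_sq]
        exact pow_pos (norm_pos_iff.mpr (sub_ne_zero_of_ne (Ne.symm hwh))) 2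
      rcases mul_eq_zero.mp h1 with h3 | h3
      · exact h3
      · exact absurd h3 (ne_of_gt h2)
    -- p is on segment a b
    have hsum3 : ∑ y ∈ M, μ y = μ a + (μ h + μ b) := by
      rw [hMdef]
      rw [Finset.sum_insert (by simp [hah, hab]), Finset.sum_insert (by simp [hhb]),
        Finset.sum_singleton]
    have hp3 : p = μ a • a + (μ h • h + μ b • b) := by
      rw [hpsum, hMdef]
      rw [Finset.sum_insert (by simp [hah, hab]), Finset.sum_insert (by simp [hhb]),
        Finset.sum_singleton]
    have hseg : p ∈ segment ℝ a b := by
      refine ⟨μ a, μ b, hμ0 a haM, hμ0 b hbM, ?_, ?_⟩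
      · rw [hμ1] at hsum3
        rw [hμh] at hsum3
        linarith [hsum3.symm]
      · rw [hp3, hμh, zero_smul, zero_add]
    have hcol : Collinear ℝ ({p, a, b} : Set Pt) := by
      apply collinear_insert_of_mem_affineSpan_pair
      apply convexHull_subset_affineSpan
      rw [convexHull_pair]
      exact hseg
    have hpa : p ≠ a := fun he => hca (by rw [← he, hcp])
    have hpb : p ≠ b := fun he => hcb (by rw [← he, hcp])
    exact hgp.1 p (Or.inl (by exact_mod_cast hpP)) a (Or.inl (by exact_mod_cast haP))
      b (Or.inl (by exact_mod_cast hbP)) hpa hpb hab hcol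
  -- peel
  have peel : ∀ (S : Finset (Fin m)) (j : Fin m), j ∈ S → pred' j ∈ S → succ' j ∈ S →
      p ∈ convexHull ℝ (↑(S.image q)) →
      p ∈ convexHull ℝ ({q (pred' j), q j, q (succ' j)} : Set Pt) ∨
      p ∈ convexHull ℝ (↑((S.erase j).image q)) := by
    intro S j hjS hαS hβS hpS
    set a : Pt := q (pred' j) with hadef
    set h : Pt := q j with hhdef
    set b : Pt := q (succ' j) with hbdef
    have hD : 0 < det2 (h - a) (b - a) := hB2 j
    have hDne : det2 (h - a) (b - a) ≠ 0 := ne_of_gt hD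
    rcases le_total 0 (det2 (b - a) (p - a)) with hcase | hcase
    · -- p is on the far side of the chord a-b : p is in the peeled polygon
      right
      rw [Finset.convexHull_eq] at hpS
      obtain ⟨μ, hμ0, hμ1, hμc⟩ := hpS
      set M : Finset Pt := S.image q with hMdef
      have hpsum : p = ∑ y ∈ M, μ y • y := by
        rw [← hμc, Finset.centerMass, hμ1, inv_one, one_smul]
        simp
      have hhM : h ∈ M := Finset.mem_image_of_mem q hjS
      have himage : (S.erase j).image q = M.erase h := Finset.image_erase hqinj S j
      set ν : ℝ := μ h with hνdef
      have hν0 : 0 ≤ ν := hμ0 h hhM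
      have hν1 : ν ≤ 1 := by
        rw [← hμ1]
        exact Finset.single_le_sum (fun i hi => hμ0 i hi) hhM
      have hsum_er : ∑ y ∈ M.erase h, μ y = 1 - ν := by
        have := Finset.add_sum_erase M μ hhM
        rw [hμ1] at this
        linarith [this]
      by_cases hν1' : ν = 1
      · exfalso
        have hrest : ∀ y ∈ M.erase h, μ y = 0 := by
          have hzero : ∑ y ∈ M.erase h, μ y = 0 := by rw [hsum_er, hν1']; ring
          intro y hy
          exact (Finset.sum_eq_zero_iff_of_nonneg
            (fun i hi => hμ0 i (Finset.mem_of_mem_erase hi))).mp hzero y hy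
        have hph : p = h := by
          rw [hpsum, Finset.sum_eq_single_of_mem h hhM]
          · rw [← hνdef, hν1', one_smul]
          · intro y hy hne
            rw [hrest y (Finset.mem_erase.mpr ⟨hne, hy⟩), zero_smul]
        rw [hph] at hcase
        have : det2 (b - a) (h - a) = - det2 (h - a) (b - a) := det2_swap _ _
        linarith
      have hν1lt : ν < 1 := lt_of_le_of_ne hν1 hν1'
      have h1ν : (0:ℝ) < 1 - ν := by linarith
      by_cases hν0' : ν = 0
      · -- p is already a combination of the remaining points
        rw [himage]
        have hsum_er1 : ∑ y ∈ M.erase h, μ y = 1 := by rw [hsum_er, hν0']; ring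
        have hmem := Finset.centerMass_mem_convexHull (M.erase h) (w := μ) (z := id)
          (fun i hi => hμ0 i (Finset.mem_of_mem_erase hi))
          (by rw [hsum_er1]; exact one_pos) (fun i hi => Finset.mem_coe.mpr hi)
        have hcm : (M.erase h).centerMass μ id = p := by
          rw [Finset.centerMass, hsum_er1, inv_one, one_smul]
          rw [hpsum]
          simp only [id]
          apply Finset.sum_erase
          rw [← hνdef, hν0', zero_smul]
        rw [← hcm]
        exact hmem
      have hν0lt : 0 < ν := lt_of_le_of_ne hν0 (Ne.symm hν0')
      set r : Pt := (1 - ν)⁻¹ • (∑ y ∈ M.erase h, μ y • y) with hrdef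
      have hr_mem : r ∈ convexHull ℝ (↑(M.erase h)) := by
        have hmem := Finset.centerMass_mem_convexHull (M.erase h) (w := μ) (z := id)
          (fun i hi => hμ0 i (Finset.mem_of_mem_erase hi))
          (by rw [hsum_er]; exact h1ν) (fun i hi => Finset.mem_coe.mpr hi)
        have : (M.erase h).centerMass μ id = r := by
          rw [Finset.centerMass, hsum_er, hrdef]
          simp only [id]
        rw [← this]
        exact hmem
      have hdecomp : p = ν • h + (1 - ν) • r := by
        rw [hrdef, smul_inv_smul₀ (ne_of_gt h1ν)]
        rw [hpsum, ← Finset.add_sum_erase M (fun y => μ y • y) hhM]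
      have hFp : det2 (b - a) (p - a)
          = ν * det2 (b - a) (h - a) + (1 - ν) * det2 (b - a) (r - a) := by
        rw [hdecomp]
        exact det2_combo _ _ _ _ _ _ (by ring)
      have hFh : det2 (b - a) (h - a) = - det2 (h - a) (b - a) := det2_swap _ _
      have hFr : 0 < det2 (b - a) (r - a) := by
        rw [hFh] at hFp
        nlinarith
      set t : ℝ := det2 (b - a) (r - a) / (det2 (b - a) (r - a) + det2 (h - a) (b - a))
        with htdef
      have htpos : 0 < t := div_pos hFr (by linarith)
      have htlt : t < 1 := by
        rw [htdef, div_lt_one (by linarith)]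
        linarith
      set z : Pt := t • h + (1 - t) • r with hzdef
      have hFz : det2 (b - a) (z - a) = 0 := by
        rw [hzdef, det2_combo _ _ _ _ _ _ (by ring : t + (1 - t) = (1:ℝ)), hFh, htdef]
        field_simp
        ring
      have hz_full : z ∈ convexHull ℝ (Set.range q) := by
        have hh_hull : h ∈ convexHull ℝ (Set.range q) :=
          subset_convexHull ℝ _ ⟨j, rfl⟩
        have hr_hull : r ∈ convexHull ℝ (Set.range q) := by
          apply convexHull_mono ?_ hr_mem
          intro y hy
          obtain ⟨σ, _, rfl⟩ := Finset.mem_image.mp (Finset.mem_of_mem_erase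
            (Finset.mem_coe.mp hy))
          exact ⟨σ, rfl⟩
        exact (convex_convexHull ℝ (Set.range q)) hh_hull hr_hull (le_of_lt htpos)
          (by linarith) (by ring)
      have hza : 0 ≤ det2 (b - h) (z - h) := hf3nn j z hz_full
      have hzb : 0 ≤ det2 (h - a) (z - a) := hf2nn j z hz_full
      have hsumz := cramer_sum a h b z
      have hcomboz := cramer_combo a h b z hDne
      rw [hFz] at hsumz hcomboz
      set za : ℝ := det2 (b - h) (z - h) / det2 (h - a) (b - a) with hzadef
      set zb : ℝ := det2 (h - a) (z - a) / det2 (h - a) (b - a) with hzbdef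
      have hzeq : za • a + zb • b = z := by
        rw [← hcomboz]
        simp only [neg_zero, zero_div, zero_smul, add_zero]
      have hzasum : za + zb = 1 := by
        rw [hzadef, hzbdef]
        field_simp
        linarith
      have hz_seg : z ∈ convexHull ℝ (↑((S.erase j).image q)) := by
        have haM : a ∈ (S.erase j).image q :=
          Finset.mem_image_of_mem q (Finset.mem_erase.mpr ⟨hpred_ne j, hαS⟩)
        have hbM : b ∈ (S.erase j).image q :=
          Finset.mem_image_of_mem q (Finset.mem_erase.mpr ⟨hsucc_ne j, hβS⟩)
        apply segment_subset_convexHull (Finset.mem_coe.mpr haM) (Finset.mem_coe.mpr hbM)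
        exact ⟨za, zb, div_nonneg hza (le_of_lt hD), div_nonneg hzb (le_of_lt hD),
          hzasum, hzeq⟩
      have hνt : ν ≤ t := by
        have hzt : t * det2 (b - a) (h - a) + (1 - t) * det2 (b - a) (r - a) = 0 := by
          have := hFz
          rw [hzdef, det2_combo _ _ _ _ _ _ (by ring : t + (1 - t) = (1:ℝ))] at this
          exact this
        rw [hFh] at hzt hFp
        nlinarith
      have hpzr : p = (ν / t) • z + ((t - ν) / t) • r := by
        rw [hzdef, smul_add, smul_smul, smul_smul, add_assoc, ← add_smul]
        have e1 : ν / t * t = ν := by field_simp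
        have e2 : ν / t * (1 - t) + (t - ν) / t = 1 - ν := by
          field_simp
          ring
        rw [e1, e2]
        exact hdecomp
      have hr_seg : r ∈ convexHull ℝ (↑((S.erase j).image q)) := by
        rw [himage]
        exact hr_mem
      rw [hpzr]
      exact (convex_convexHull ℝ _) hz_seg hr_seg
        (div_nonneg (le_of_lt hν0lt) (le_of_lt htpos))
        (div_nonneg (by linarith) (le_of_lt htpos))
        (by field_simp; ring)
    · -- p is inside the triangle a h b
      left
      have hpa : 0 ≤ det2 (b - h) (p - h) := hf3nn j p hHull
      have hpb : 0 ≤ det2 (h - a) (p - a) := hf2nn j p hHull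
      have hsump := cramer_sum a h b p
      have hcombop := cramer_combo a h b p hDne
      set wa : ℝ := det2 (b - h) (p - h) / det2 (h - a) (b - a) with hwadef
      set wh : ℝ := - det2 (b - a) (p - a) / det2 (h - a) (b - a) with hwhdef
      set wb : ℝ := det2 (h - a) (p - a) / det2 (h - a) (b - a) with hwbdef
      have hwa0 : 0 ≤ wa := div_nonneg hpa (le_of_lt hD)
      have hwh0 : 0 ≤ wh := div_nonneg (by linarith) (le_of_lt hD)
      have hwb0 : 0 ≤ wb := div_nonneg hpb (le_of_lt hD)
      have hwsum : wa + wh + wb = 1 := by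
        rw [hwadef, hwhdef, hwbdef]
        field_simp
        linarith
      have hcm : (Finset.univ : Finset (Fin 3)).centerMass ![wa, wh, wb] ![a, h, b] = p := by
        rw [Finset.centerMass, Fin.sum_univ_three, Fin.sum_univ_three]
        simp only [Matrix.cons_val_zero, Matrix.cons_val_one, Matrix.head_cons,
          Matrix.cons_val_two, Matrix.tail_cons]
        rw [hwsum, inv_one, one_smul]
        exact hcombop
      rw [← hcm]
      apply Finset.centerMass_mem_convexHull
      · intro i _
        fin_cases i
        · simpa using hwa0
        · simpa using hwh0
        · simpa using hwb0
      · rw [Fin.sum_univ_three]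
        simp only [Matrix.cons_val_zero, Matrix.cons_val_one, Matrix.head_cons,
          Matrix.cons_val_two, Matrix.tail_cons]
        rw [hwsum]
        exact one_pos
      · intro i _
        fin_cases i <;> simp
  -- induction
  have main : ∀ (n : ℕ) (S : Finset (Fin m)), S.card ≤ n →
      (∀ j : Fin m, c (q j) ≠ i₀ → j ∈ S) →
      p ∈ convexHull ℝ (↑(S.image q)) → False := by
    intro n
    induction n with
    | zero =>
      intro S hcard hnb hp
      obtain ⟨j₀, hj₀⟩ := hblack
      have : succ' j₀ ∈ S := hnb _ (hnb_succ j₀ hj₀)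
      have : 0 < S.card := Finset.card_pos.mpr ⟨_, this⟩
      omega
    | succ n ih =>
      intro S hcard hnb hp
      by_cases hbS : ∃ j ∈ S, c (q j) = i₀
      · obtain ⟨j, hjS, hjb⟩ := hbS
        have hαS : pred' j ∈ S := hnb _ (hnb_pred j hjb)
        have hβS : succ' j ∈ S := hnb _ (hnb_succ j hjb)
        rcases peel S j hjS hαS hβS hp with h | h
        · exact caseB j hjb h
        · apply ih (S.erase j) ?_ ?_ h
          · have := Finset.card_erase_of_mem hjS
            have hc1 : 1 ≤ S.card := Finset.card_pos.mpr ⟨j, hjS⟩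
            omega
          · intro j' hj'
            rw [Finset.mem_erase]
            exact ⟨fun hh => hj' (hh ▸ hjb), hnb j' hj'⟩
      · push_neg at hbS
        apply caseA (S.image q) ?_ hp
        intro x hx
        rw [Finset.mem_image] at hx
        obtain ⟨σ, hσS, rfl⟩ := hx
        exact ⟨hqP σ, hbS σ hσS⟩
  apply main m Finset.univ ?_ ?_ ?_
  · rw [Finset.card_univ, Fintype.card_fin]
  · intro j _
    exact Finset.mem_univ j
  · have : Set.range q = ↑(Finset.univ.image q) := by
      simp [Finset.coe_image, Finset.coe_univ, Set.image_univ]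
    rw [← this]
    exact hHull
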